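/- Let α ∈ [1/2, 1] with d^α, d^{1−α} integers, let T ∈ ℝ^{d×d} be a positive semidefinite symmetric Toeplitz matrix, and let R_α be the sparse ruler. Then for every k ≤ d, ‖T_{R_α}‖₂² ≤ (32 k² / d^{2−2α}) · ‖T‖₂² + 8 · min( ‖T − T_k‖₂², (2/d^{1−α}) ‖T − T_k‖_F² ), where T_k is a best rank-k approximation of T (a rank-k matrix minimizing both ‖T − M‖_F and ‖T − M‖₂ over rank-k matrices M). -/

import Mathlib

open MeasureTheory ProbabilityTheory Matrix Real

noncomputable section

/-- The uniform quantizer with level `Δ`: `Q_Δ(x) = Δ(⌊x/Δ⌋ + 1/2)`. -/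
def quant (Δ x : ℝ) : ℝ := Δ * (⌊x / Δ⌋ + 1 / 2)

/-- The uniform distribution on `[-Δ/2, Δ/2]`. -/
def unifMeasure (Δ : ℝ) : Measure ℝ :=
  (ENNReal.ofReal Δ)⁻¹ • (volume.restrict (Set.Icc (-(Δ / 2)) (Δ / 2)))

/-- The triangular-dither distribution: the law of the sum of two independent
uniform random variables on `[-Δ/2, Δ/2]`. -/
def triMeasure (Δ : ℝ) : Measure ℝ :=
  Measure.map (fun p : ℝ × ℝ => p.1 + p.2) ((unifMeasure Δ).prod (unifMeasure Δ))

/-- The centered multivariate Gaussian measure `N(0, T)` on `ℝ^d`, realized as the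
pushforward of the standard Gaussian by the positive semidefinite square root of `T`. -/
def multiGaussian {d : ℕ} (T : Matrix (Fin d) (Fin d) ℝ) (hT : T.PosSemidef) :
    Measure (Fin d → ℝ) :=
  Measure.map (fun z => ((hT.1.eigenvectorUnitary : Matrix (Fin d) (Fin d) ℝ) *
      diagonal ((RCLike.ofReal : ℝ → ℝ) ∘ Real.sqrt ∘ hT.1.eigenvalues) *
      (star hT.1.eigenvectorUnitary : Matrix (Fin d) (Fin d) ℝ)).mulVec z) (Measure.pi fun _ : Fin d => gaussianReal 0 1)

/-- `R_s`: the ordered pairs `(j, k) ∈ R × R` with `j - k = s`. -/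
def pairsOf {d : ℕ} (R : Finset (Fin d)) (s : ℕ) : Finset (Fin d × Fin d) :=
  (R ×ˢ R).filter fun p => (p.1 : ℕ) = (p.2 : ℕ) + s

/-- A ruler: each distance `s ∈ {0, …, d-1}` is realized by some pair in `R`. -/
def IsRuler {d : ℕ} (R : Finset (Fin d)) : Prop :=
  ∀ s < d, (pairsOf R s).Nonempty

/-- The coverage coefficient `φ(R) = Σ_{s=1}^{d-1} 1/|R_s|`. -/
def coverage {d : ℕ} (R : Finset (Fin d)) : ℝ :=
  ∑ s ∈ Finset.Ico 1 d, (1 : ℝ) / (pairsOf R s).card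

/-- The symmetric Toeplitz matrix generated by `a`, with `Toep(a)_{j,k} = a_{|j-k|}`. -/
def toep {d : ℕ} (a : Fin d → ℝ) : Matrix (Fin d) (Fin d) ℝ :=
  fun j k => a ⟨Nat.dist j.1 k.1, by
    have hj := j.isLt; have hk := k.isLt; simp only [Nat.dist]; omega⟩

/-- The `ℓ²` operator (spectral) norm of a matrix. -/
def opNorm {m : Type*} [Fintype m] [DecidableEq m] (A : Matrix m m ℝ) : ℝ :=
  ‖Matrix.toEuclideanCLM (𝕜 := ℝ) A‖

/-- The Frobenius norm of a matrix. -/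
def frobNorm {m : Type*} [Fintype m] (A : Matrix m m ℝ) : ℝ :=
  Real.sqrt (∑ i, ∑ j, (A i j) ^ 2)

/-- The entrywise maximum norm of a matrix. -/
def maxNorm {m : Type*} [Fintype m] (A : Matrix m m ℝ) : ℝ :=
  ⨆ i, ⨆ j, |A i j|

/-- The principal submatrix of `A` with rows and columns indexed by `R`. -/
def subMatrix {d : ℕ} (A : Matrix (Fin d) (Fin d) ℝ) (R : Finset (Fin d)) :
    Matrix R R ℝ :=
  A.submatrix (fun i : R => (i : Fin d)) (fun j : R => (j : Fin d))

/-- The ruler-based quantized coefficient estimator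
`â_s = (1/(n|R_s|)) Σ_l Σ_{(j,k)∈R_s} ẋ_j^{(l)} ẋ_k^{(l)} − (Δ²/4)·1{s=0}`. -/
def hatCoef {d : ℕ} (Δ : ℝ) (R : Finset (Fin d)) (n : ℕ)
    (xdot : Fin n → Fin d → ℝ) (s : ℕ) : ℝ :=
  (1 / (n * (pairsOf R s).card)) *
      ∑ l, ∑ p ∈ pairsOf R s, xdot l p.1 * xdot l p.2
    - Δ ^ 2 / 4 * (if s = 0 then 1 else 0)

/-- The ruler-based quantized Toeplitz covariance estimator `T̂ = Toep(â)`. -/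
def hatT {d : ℕ} (Δ : ℝ) (R : Finset (Fin d)) (n : ℕ)
    (xdot : Fin n → Fin d → ℝ) : Matrix (Fin d) (Fin d) ℝ :=
  toep fun s => hatCoef Δ R n xdot s.1

/-- The quantized samples `ẋ^{(l)} = Q_Δ(x^{(l)} + τ^{(l)})`, as a function of the
random outcome `ω`. -/
def xdotOf {d n : ℕ} {Ω : Type*} (Δ : ℝ) (x τ : Fin n → Ω → Fin d → ℝ) (ω : Ω) :
    Fin n → Fin d → ℝ :=
  fun l i => quant Δ (x l ω i + τ l ω i)

/-- The setting of the ruler-based quantized Toeplitz covariance estimation problem: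
`T` is a positive semidefinite symmetric Toeplitz matrix, `x^{(1)}, …, x^{(n)}` are
i.i.d. samples from `N(0, T)`, the dithers `τ^{(1)}, …, τ^{(n)}` have i.i.d. triangular
entries at level `Δ`, and all samples and dithers are jointly independent. -/
structure QuantSetting {d n : ℕ} {Ω : Type*} [MeasurableSpace Ω] (μ : Measure Ω)
    (T : Matrix (Fin d) (Fin d) ℝ) (Δ : ℝ)
    (x τ : Fin n → Ω → Fin d → ℝ) : Prop where
  psd : T.PosSemidef
  toeplitz : ∃ a : Fin d → ℝ, T = toep a
  quantLevel : 0 < Δ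
  meas_x : ∀ l, Measurable (x l)
  meas_τ : ∀ l, Measurable (τ l)
  law_x : ∀ l, μ.map (x l) = multiGaussian T psd
  law_τ : ∀ l, μ.map (τ l) = Measure.pi fun _ : Fin d => triMeasure Δ
  indep : iIndepFun (Sum.elim x τ) μ

end
noncomputable section

/-- The ruler `R_α = {1,…,d^α} ∪ {d, d−d^{1−α}, …, d−(d^α−1)d^{1−α}}` (with the
positions `1,…,d` represented by `Fin d`), parametrized by `a = d^α`, `b = d^{1−α}`. -/
def rulerAlpha (d a b : ℕ) : Finset (Fin d) :=
  (Finset.univ.filter fun j : Fin d => (j : ℕ) < a) ∪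
    (Finset.univ.filter fun j : Fin d => ∃ t ∈ Finset.range a, (j : ℕ) + t * b + 1 = d)

/-- `L_e(x) = e_0 + 2 Σ_{s=1}^{d-1} e_s cos(2πsx)`. -/
def Lfun {d : ℕ} (e : Fin d → ℝ) (x : ℝ) : ℝ :=
  ∑ s : Fin d, (if (s : ℕ) = 0 then 1 else 2) * e s * Real.cos (2 * Real.pi * s * x)

/-- Entrywise thresholding of a matrix at level `ζ`. -/
def thresholdMat {d : ℕ} (ζ : ℝ) (A : Matrix (Fin d) (Fin d) ℝ) :
    Matrix (Fin d) (Fin d) ℝ :=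
  fun i j => if ζ ≤ |A i j| then A i j else 0

end
namespace Stmt8

open Matrix

variable {n : Type*} [Fintype n]

lemma dot_self_nonneg' (x : n → ℝ) : 0 ≤ x ⬝ᵥ x :=
  Finset.sum_nonneg fun i _ => mul_self_nonneg _

lemma euclid_norm_eq [DecidableEq n] (x : n → ℝ) :
    ‖(WithLp.equiv 2 (n → ℝ)).symm x‖ = Real.sqrt (x ⬝ᵥ x) := by
  rw [EuclideanSpace.norm_eq]
  congr 1
  simp [dotProduct, Real.norm_eq_abs, sq_abs, pow_two]

lemma dot_mulVec_le_opNorm [DecidableEq n] (A : Matrix n n ℝ) (x y : n → ℝ) :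
    y ⬝ᵥ A.mulVec x ≤ opNorm A * Real.sqrt (y ⬝ᵥ y) * Real.sqrt (x ⬝ᵥ x) := by
  have key : y ⬝ᵥ A.mulVec x =
      (inner ℝ ((WithLp.equiv 2 (n → ℝ)).symm y)
        ((Matrix.toEuclideanCLM (𝕜 := ℝ) A) ((WithLp.equiv 2 (n → ℝ)).symm x)) : ℝ) := by
    change y ⬝ᵥ A.mulVec x = (A *ᵥ x) ⬝ᵥ star y
    rw [dotProduct_comm]
    simp
  rw [key]
  calc (inner ℝ ((WithLp.equiv 2 (n → ℝ)).symm y)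
        ((Matrix.toEuclideanCLM (𝕜 := ℝ) A) ((WithLp.equiv 2 (n → ℝ)).symm x)) : ℝ)
      ≤ ‖(WithLp.equiv 2 (n → ℝ)).symm y‖ *
        ‖(Matrix.toEuclideanCLM (𝕜 := ℝ) A) ((WithLp.equiv 2 (n → ℝ)).symm x)‖ :=
        real_inner_le_norm _ _
    _ ≤ ‖(WithLp.equiv 2 (n → ℝ)).symm y‖ *
        (opNorm A * ‖(WithLp.equiv 2 (n → ℝ)).symm x‖) := by
        exact mul_le_mul_of_nonneg_left
          ((Matrix.toEuclideanCLM (𝕜 := ℝ) A).le_opNorm _) (norm_nonneg _)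
    _ = opNorm A * Real.sqrt (y ⬝ᵥ y) * Real.sqrt (x ⬝ᵥ x) := by
        rw [euclid_norm_eq, euclid_norm_eq]; ring

lemma mulVec_symm_dot (A : Matrix n n ℝ) (hsym : Aᵀ = A) (x y : n → ℝ) :
    y ⬝ᵥ A.mulVec x = x ⬝ᵥ A.mulVec y := by
  conv_lhs => rw [Matrix.dotProduct_mulVec, ← hsym, Matrix.vecMul_transpose]
  exact dotProduct_comm _ _

lemma psd_form_cs (A : Matrix n n ℝ) (hsym : Aᵀ = A)
    (h0 : ∀ z : n → ℝ, 0 ≤ z ⬝ᵥ A.mulVec z) (x y : n → ℝ) :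
    (y ⬝ᵥ A.mulVec x) ^ 2 ≤ (x ⬝ᵥ A.mulVec x) * (y ⬝ᵥ A.mulVec y) := by
  set qx := x ⬝ᵥ A.mulVec x
  set qy := y ⬝ᵥ A.mulVec y
  set B := y ⬝ᵥ A.mulVec x with hB
  have h : ∀ t : ℝ, 0 ≤ qy * (t * t) + (2 * B) * t + qx := by
    intro t
    have := h0 (x + t • y)
    have hexp : (x + t • y) ⬝ᵥ A.mulVec (x + t • y) = qy * (t * t) + (2 * B) * t + qx := by
      rw [Matrix.mulVec_add, Matrix.mulVec_smul]
      rw [add_dotProduct, smul_dotProduct]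
      rw [dotProduct_add, dotProduct_add, dotProduct_smul,
        dotProduct_smul]
      have hxy : x ⬝ᵥ A.mulVec y = B := by rw [hB, mulVec_symm_dot A hsym]
      simp only [smul_eq_mul, hxy]
      ring
    linarith [hexp ▸ this]
  have hd := discrim_le_zero h
  rw [discrim] at hd
  nlinarith [hd]

lemma opNorm_le_of_psd_form [DecidableEq n] (A : Matrix n n ℝ) (hsym : Aᵀ = A)
    (h0 : ∀ z : n → ℝ, 0 ≤ z ⬝ᵥ A.mulVec z) (c : ℝ) (hc : 0 ≤ c)
    (hq : ∀ z : n → ℝ, z ⬝ᵥ A.mulVec z ≤ c * (z ⬝ᵥ z)) : opNorm A ≤ c := by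
  have bilin : ∀ x y : n → ℝ, y ⬝ᵥ A.mulVec x ≤ c * Real.sqrt (y ⬝ᵥ y) * Real.sqrt (x ⬝ᵥ x) := by
    intro x y
    have h1 := psd_form_cs A hsym h0 x y
    have h2 : (y ⬝ᵥ A.mulVec x) ^ 2 ≤ (c * Real.sqrt (y ⬝ᵥ y) * Real.sqrt (x ⬝ᵥ x)) ^ 2 := by
      have hx := hq x
      have hy := hq y
      have hsx : Real.sqrt (x ⬝ᵥ x) ^ 2 = x ⬝ᵥ x := Real.sq_sqrt (dot_self_nonneg' x)
      have hsy : Real.sqrt (y ⬝ᵥ y) ^ 2 = y ⬝ᵥ y := Real.sq_sqrt (dot_self_nonneg' y)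
      calc (y ⬝ᵥ A.mulVec x) ^ 2 ≤ (x ⬝ᵥ A.mulVec x) * (y ⬝ᵥ A.mulVec y) := h1
        _ ≤ (c * (x ⬝ᵥ x)) * (c * (y ⬝ᵥ y)) := by
            apply mul_le_mul hx hy (h0 y) (le_trans (h0 x) hx)
        _ = (c * Real.sqrt (y ⬝ᵥ y) * Real.sqrt (x ⬝ᵥ x)) ^ 2 := by
            rw [mul_pow, mul_pow, hsx, hsy]; ring
    have hrhs : 0 ≤ c * Real.sqrt (y ⬝ᵥ y) * Real.sqrt (x ⬝ᵥ x) := by positivity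
    nlinarith [h2, hrhs, sq_nonneg (y ⬝ᵥ A.mulVec x - c * Real.sqrt (y ⬝ᵥ y) * Real.sqrt (x ⬝ᵥ x))]
  rw [opNorm]
  apply ContinuousLinearMap.opNorm_le_bound _ hc
  intro x'
  set x : n → ℝ := WithLp.equiv 2 (n → ℝ) x' with hx
  have hx' : (WithLp.equiv 2 (n → ℝ)).symm x = x' := by simp [hx]
  set w : n → ℝ := A.mulVec x with hw
  have happ : (Matrix.toEuclideanCLM (𝕜 := ℝ) A) x' = (WithLp.equiv 2 (n → ℝ)).symm w := by
    exact (congrArg (Matrix.toEuclideanCLM (𝕜 := ℝ) A) hx'.symm).trans (Matrix.toEuclideanCLM_toLp A x)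
  rw [happ, euclid_norm_eq, ← hx', euclid_norm_eq]
  have hww := bilin x w
  by_cases hzero : w ⬝ᵥ w = 0
  · rw [hzero, Real.sqrt_zero]
    positivity
  · have hwpos : 0 < w ⬝ᵥ w := lt_of_le_of_ne (dot_self_nonneg' w) (Ne.symm hzero)
    have hsq : Real.sqrt (w ⬝ᵥ w) * Real.sqrt (w ⬝ᵥ w) = w ⬝ᵥ w :=
      Real.mul_self_sqrt (le_of_lt hwpos)
    have hspos : 0 < Real.sqrt (w ⬝ᵥ w) := Real.sqrt_pos.mpr hwpos
    have : Real.sqrt (w ⬝ᵥ w) * Real.sqrt (w ⬝ᵥ w) ≤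
        (c * Real.sqrt (x ⬝ᵥ x)) * Real.sqrt (w ⬝ᵥ w) := by
      rw [hsq]
      calc w ⬝ᵥ w = w ⬝ᵥ A.mulVec x := rfl
        _ ≤ c * Real.sqrt (w ⬝ᵥ w) * Real.sqrt (x ⬝ᵥ x) := hww
        _ = (c * Real.sqrt (x ⬝ᵥ x)) * Real.sqrt (w ⬝ᵥ w) := by ring
    exact le_of_mul_le_mul_right (by linarith) hspos




lemma exists_onfam {d k : ℕ} (Tk : Matrix (Fin d) (Fin d) ℝ) (hrank : Tk.rank = k) :
    ∃ p : Fin k → (Fin d → ℝ),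
      (∀ i j, p i ⬝ᵥ p j = if i = j then 1 else 0) ∧
      (∀ z : Fin d → ℝ, Tk.mulVec z = ∑ i, (p i ⬝ᵥ Tk.mulVec z) • p i) := by
  classical
  set E := EuclideanSpace ℝ (Fin d)
  set eL : E ≃ₗ[ℝ] (Fin d → ℝ) := WithLp.linearEquiv 2 ℝ (Fin d → ℝ) with heL
  set W0 : Submodule ℝ (Fin d → ℝ) := LinearMap.range Tk.mulVecLin with hW0
  set W : Submodule ℝ E := W0.map (eL.symm : (Fin d → ℝ) →ₗ[ℝ] E) with hW
  have hfin : Module.finrank ℝ W = k := by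
    rw [hW, LinearEquiv.finrank_map_eq]
    exact hrank
  have hdotinner : ∀ v w : E, inner ℝ v w = (eL v) ⬝ᵥ (eL w) := by
    intro v w
    have h1 : v = (WithLp.equiv 2 (Fin d → ℝ)).symm (eL v) := rfl
    have h2 : w = (WithLp.equiv 2 (Fin d → ℝ)).symm (eL w) := rfl
    conv_lhs => rw [h1, h2]
    change (eL w) ⬝ᵥ star (eL v) = _
    rw [dotProduct_comm]
    simp
  have honb := (stdOrthonormalBasis ℝ W).orthonormal
  set onb := (stdOrthonormalBasis ℝ W).reindex (finCongr hfin) with honbdef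
  set p : Fin k → (Fin d → ℝ) := fun i => eL ((onb i : E)) with hp
  refine ⟨p, ?_, ?_⟩
  · intro i j
    have := onb.orthonormal
    rw [orthonormal_iff_ite] at this
    have h := this i j
    rw [Submodule.coe_inner] at h
    rw [hdotinner] at h
    simpa [hp] using h
  · intro z
    have hmem : Tk.mulVec z ∈ W0 := ⟨z, by rw [Matrix.mulVecLin_apply]⟩
    have hmemW : eL.symm (Tk.mulVec z) ∈ W := ⟨Tk.mulVec z, hmem, rfl⟩
    set w : W := ⟨eL.symm (Tk.mulVec z), hmemW⟩ with hwdef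
    have hrepr := onb.sum_repr w
    have hcoe : ((∑ i, onb.repr w i • onb i : W) : E) = (w : E) := by rw [hrepr]
    have hcoe2 : (∑ i, onb.repr w i • (onb i : E)) = (w : E) := by
      rw [← hcoe]
      push_cast
      rfl
    have happly := congrArg eL hcoe2
    rw [map_sum] at happly
    have hwE : eL (w : E) = Tk.mulVec z := by
      rw [hwdef]
      simp
    calc Tk.mulVec z = ∑ i, eL (onb.repr w i • (onb i : E)) := by rw [happly, hwE]
      _ = ∑ i, (p i ⬝ᵥ Tk.mulVec z) • p i := by
          apply Finset.sum_congr rfl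
          intro i _
          rw [_root_.map_smul]
          congr 1
          rw [onb.repr_apply_apply, Submodule.coe_inner, hdotinner, hwE]




variable {n : Type*} [Fintype n]

lemma dot_sum_right {ι : Type*} (sf : Finset ι) (v : n → ℝ) (g : ι → n → ℝ) :
    v ⬝ᵥ (∑ i ∈ sf, g i) = ∑ i ∈ sf, v ⬝ᵥ g i := by
  simp only [dotProduct, Finset.sum_apply, Finset.mul_sum]
  rw [Finset.sum_comm]

lemma sum_dot_left {ι : Type*} (sf : Finset ι) (v : n → ℝ) (g : ι → n → ℝ) :
    (∑ i ∈ sf, g i) ⬝ᵥ v = ∑ i ∈ sf, g i ⬝ᵥ v := by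
  simp only [dotProduct, Finset.sum_apply, Finset.sum_mul]
  rw [Finset.sum_comm]

lemma mulVec_sum' {ι : Type*} (sf : Finset ι) (A : Matrix n n ℝ) (g : ι → n → ℝ) :
    A.mulVec (∑ i ∈ sf, g i) = ∑ i ∈ sf, A.mulVec (g i) := by
  have h := map_sum A.mulVecLin g sf
  simp only [Matrix.mulVecLin_apply] at h
  exact h

lemma kyfan {d k b' : ℕ} (T Tk : Matrix (Fin d) (Fin d) ℝ) (hrank : Tk.rank = k)
    (u : Fin b' → Fin d → ℝ) (s : ℝ) (hs : 0 ≤ s)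
    (hu : ∀ c c', u c ⬝ᵥ u c' = if c = c' then s else 0) :
    ∑ c, u c ⬝ᵥ T.mulVec (u c) ≤
      ((k : ℝ) * opNorm T +
        min ((b' : ℝ) * opNorm (T - Tk)) (Real.sqrt b' * frobNorm (T - Tk))) * s := by
  classical
  obtain ⟨p, hpon, hpexp⟩ := exists_onfam Tk hrank
  set Em := T - Tk with hEm
  set σ := opNorm T with hσ
  set β := opNorm Em with hβ
  set f := frobNorm Em with hf
  have hσ0 : 0 ≤ σ := norm_nonneg _
  have hβ0 : 0 ≤ β := norm_nonneg _
  have hf0 : 0 ≤ f := Real.sqrt_nonneg _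
  have hTk : ∀ x : Fin d → ℝ, Tk.mulVec x = T.mulVec x - Em.mulVec x := by
    intro x; rw [hEm, Matrix.sub_mulVec]; abel
  set r : Fin b' → Fin d → ℝ := fun c => u c - ∑ i, (p i ⬝ᵥ u c) • p i with hr
  -- the pointwise decomposition
  have hdec : ∀ c, u c ⬝ᵥ T.mulVec (u c) =
      (∑ i, (p i ⬝ᵥ T.mulVec (u c)) * (u c ⬝ᵥ p i)) + r c ⬝ᵥ Em.mulVec (u c) := by
    intro c
    have h0 : u c ⬝ᵥ T.mulVec (u c) = u c ⬝ᵥ Tk.mulVec (u c) + u c ⬝ᵥ Em.mulVec (u c) := by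
      rw [hTk, dotProduct_sub]; ring
    have h1 : u c ⬝ᵥ Tk.mulVec (u c) = ∑ i, (p i ⬝ᵥ Tk.mulVec (u c)) * (u c ⬝ᵥ p i) := by
      conv_lhs => rw [hpexp (u c)]
      rw [dot_sum_right]
      apply Finset.sum_congr rfl; intro i _
      rw [dotProduct_smul, smul_eq_mul]
    have h2 : r c ⬝ᵥ Em.mulVec (u c) =
        u c ⬝ᵥ Em.mulVec (u c) - ∑ i, (p i ⬝ᵥ u c) * (p i ⬝ᵥ Em.mulVec (u c)) := by
      rw [hr]
      simp only
      rw [sub_dotProduct, sum_dot_left]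
      congr 1
      apply Finset.sum_congr rfl; intro i _
      rw [smul_dotProduct, smul_eq_mul]
    have h3 : ∀ i, (p i ⬝ᵥ Tk.mulVec (u c)) * (u c ⬝ᵥ p i) =
        (p i ⬝ᵥ T.mulVec (u c)) * (u c ⬝ᵥ p i)
          - (p i ⬝ᵥ u c) * (p i ⬝ᵥ Em.mulVec (u c)) := by
      intro i
      rw [hTk, dotProduct_sub]
      have hcomm : u c ⬝ᵥ p i = p i ⬝ᵥ u c := dotProduct_comm _ _
      rw [hcomm]; ring
    rw [h0, h1, h2, Finset.sum_congr rfl (fun i _ => h3 i), Finset.sum_sub_distrib]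
    ring
  -- Term1 bound
  have hTerm1 : ∀ i : Fin k, (∑ c, (p i ⬝ᵥ T.mulVec (u c)) * (u c ⬝ᵥ p i)) ≤ σ * s := by
    intro i
    set w : Fin b' → ℝ := fun c => u c ⬝ᵥ p i with hw
    set z : Fin d → ℝ := ∑ c, w c • u c with hz
    have hdotz : ∀ v : Fin d → ℝ, v ⬝ᵥ z = ∑ c, w c * (v ⬝ᵥ u c) := by
      intro v
      rw [hz, dot_sum_right]
      apply Finset.sum_congr rfl; intro c _
      rw [dotProduct_smul, smul_eq_mul]
    have hzdot : ∀ v : Fin d → ℝ, z ⬝ᵥ v = ∑ c, w c * (u c ⬝ᵥ v) := by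
      intro v
      rw [hz, sum_dot_left]
      apply Finset.sum_congr rfl; intro c _
      rw [smul_dotProduct, smul_eq_mul]
    have hzu : ∀ c, z ⬝ᵥ u c = w c * s := by
      intro c
      rw [hzdot (u c)]
      rw [Finset.sum_eq_single c]
      · rw [hu c c, if_pos rfl]
      · intro c' _ hne; rw [hu c' c, if_neg hne, mul_zero]
      · intro h; exact absurd (Finset.mem_univ c) h
    have hzz : z ⬝ᵥ z = (∑ c, w c ^ 2) * s := by
      rw [hdotz z, Finset.sum_mul]
      apply Finset.sum_congr rfl; intro c _
      rw [hzu c]; ring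
    have hzp : z ⬝ᵥ p i = ∑ c, w c ^ 2 := by
      rw [hzdot (p i)]
      apply Finset.sum_congr rfl; intro c _
      have hwc : u c ⬝ᵥ p i = w c := rfl
      rw [hwc]; ring
    have hpz : p i ⬝ᵥ z = ∑ c, w c ^ 2 := by
      rw [dotProduct_comm]; exact hzp
    have hpp : p i ⬝ᵥ p i = 1 := by rw [hpon i i, if_pos rfl]
    have hB : (∑ c, w c ^ 2) * s ≤ s ^ 2 := by
      have h := dot_self_nonneg' (s • p i - z)
      have hexp : (s • p i - z) ⬝ᵥ (s • p i - z) = s ^ 2 - (∑ c, w c ^ 2) * s := by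
        simp only [sub_dotProduct, dotProduct_sub, smul_dotProduct,
          dotProduct_smul, smul_eq_mul, hpp, hpz, hzp, hzz]
        ring
      rw [hexp] at h
      linarith
    have hlin : ∑ c, (p i ⬝ᵥ T.mulVec (u c)) * (u c ⬝ᵥ p i) = p i ⬝ᵥ T.mulVec z := by
      rw [hz, mulVec_sum', dot_sum_right]
      apply Finset.sum_congr rfl; intro c _
      rw [Matrix.mulVec_smul, dotProduct_smul, smul_eq_mul]
      have hwc : u c ⬝ᵥ p i = w c := rfl
      rw [hwc]; ring
    rw [hlin]
    calc p i ⬝ᵥ T.mulVec z ≤ σ * Real.sqrt (p i ⬝ᵥ p i) * Real.sqrt (z ⬝ᵥ z) :=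
          dot_mulVec_le_opNorm T z (p i)
      _ ≤ σ * 1 * s := by
          rw [hpp, Real.sqrt_one, hzz]
          have h1 : Real.sqrt ((∑ c, w c ^ 2) * s) ≤ Real.sqrt (s ^ 2) :=
            Real.sqrt_le_sqrt hB
          rw [Real.sqrt_sq hs] at h1
          have : 0 ≤ σ * 1 := by linarith
          exact mul_le_mul_of_nonneg_left h1 this
      _ = σ * s := by ring
  -- r bounds
  have hrru : ∀ c, r c ⬝ᵥ r c ≤ s := by
    intro c
    set q : Fin d → ℝ := ∑ i, (p i ⬝ᵥ u c) • p i with hq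
    have hdq : ∀ v : Fin d → ℝ, v ⬝ᵥ q = ∑ i, (p i ⬝ᵥ u c) * (v ⬝ᵥ p i) := by
      intro v; rw [hq, dot_sum_right]
      apply Finset.sum_congr rfl; intro i _
      rw [dotProduct_smul, smul_eq_mul]
    have hqd : ∀ v : Fin d → ℝ, q ⬝ᵥ v = ∑ i, (p i ⬝ᵥ u c) * (p i ⬝ᵥ v) := by
      intro v; rw [hq, sum_dot_left]
      apply Finset.sum_congr rfl; intro i _
      rw [smul_dotProduct, smul_eq_mul]
    have hqu : u c ⬝ᵥ q = ∑ i, (p i ⬝ᵥ u c) ^ 2 := by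
      rw [hdq (u c)]
      apply Finset.sum_congr rfl; intro i _
      rw [dotProduct_comm (u c) (p i)]; ring
    have huq : q ⬝ᵥ u c = ∑ i, (p i ⬝ᵥ u c) ^ 2 := by
      rw [hqd (u c)]
      apply Finset.sum_congr rfl; intro i _
      ring
    have hqq : q ⬝ᵥ q = ∑ i, (p i ⬝ᵥ u c) ^ 2 := by
      rw [hqd q]
      apply Finset.sum_congr rfl; intro i _
      rw [hdq (p i)]
      rw [Finset.sum_eq_single i]
      · rw [dotProduct_comm (p i) (p i), hpon i i, if_pos rfl]; ring
      · intro j _ hne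
        rw [dotProduct_comm (p i) (p j), hpon j i]
        rw [if_neg hne, mul_zero]
      · intro h; exact absurd (Finset.mem_univ i) h
    have hru : r c ⬝ᵥ r c = s - ∑ i, (p i ⬝ᵥ u c) ^ 2 := by
      rw [hr]
      simp only
      rw [sub_dotProduct, dotProduct_sub, dotProduct_sub]
      rw [← hq, hqu, huq, hqq, hu c c, if_pos rfl]
      ring
    have hsum : 0 ≤ ∑ i, (p i ⬝ᵥ u c) ^ 2 := Finset.sum_nonneg fun i _ => sq_nonneg _
    rw [hru]; linarith
  have hrr0 : ∀ c, 0 ≤ r c ⬝ᵥ r c := fun c => dot_self_nonneg' (r c)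
  -- Rem op bound
  have hRemOp : ∑ c, r c ⬝ᵥ Em.mulVec (u c) ≤ (b' : ℝ) * β * s := by
    have hb : ∀ c, r c ⬝ᵥ Em.mulVec (u c) ≤ β * s := by
      intro c
      have h0 := dot_mulVec_le_opNorm Em (u c) (r c)
      have h1 : Real.sqrt (r c ⬝ᵥ r c) ≤ Real.sqrt s := Real.sqrt_le_sqrt (hrru c)
      have h2 : Real.sqrt (u c ⬝ᵥ u c) = Real.sqrt s := by rw [hu c c]; simp
      have h3 : Real.sqrt s * Real.sqrt s = s := Real.mul_self_sqrt hs
      rw [h2] at h0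
      have h4 : β * Real.sqrt (r c ⬝ᵥ r c) * Real.sqrt s ≤ β * Real.sqrt s * Real.sqrt s := by
        have h5 := Real.sqrt_nonneg s
        have h7 : β * Real.sqrt (r c ⬝ᵥ r c) ≤ β * Real.sqrt s :=
          mul_le_mul_of_nonneg_left h1 hβ0
        exact mul_le_mul_of_nonneg_right h7 h5
      calc r c ⬝ᵥ Em.mulVec (u c) ≤ β * Real.sqrt (r c ⬝ᵥ r c) * Real.sqrt s := h0
        _ ≤ β * Real.sqrt s * Real.sqrt s := h4
        _ = β * s := by rw [mul_assoc, h3]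
    calc ∑ c, r c ⬝ᵥ Em.mulVec (u c) ≤ ∑ _c : Fin b', β * s :=
          Finset.sum_le_sum fun c _ => hb c
      _ = (b' : ℝ) * β * s := by
          rw [Finset.sum_const, Finset.card_univ, Fintype.card_fin, nsmul_eq_mul]; ring
  -- Rem Frobenius bound
  have hconv : ∀ (F : Fin d → Fin d → ℝ),
      ∑ q : Fin d × Fin d, F q.1 q.2 = ∑ m, ∑ m', F m m' := by
    intro F
    rw [← Finset.univ_product_univ, Finset.sum_product]
  have hRemF : ∑ c, r c ⬝ᵥ Em.mulVec (u c) ≤ Real.sqrt b' * f * s := by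
    set G : Fin d → Fin d → ℝ := fun m m' => ∑ c, r c m * u c m' with hG
    have step1 : ∑ c, r c ⬝ᵥ Em.mulVec (u c) = ∑ m, ∑ m', Em m m' * G m m' := by
      simp only [dotProduct, Matrix.mulVec, hG, Finset.mul_sum, Finset.sum_mul]
      rw [Finset.sum_comm]
      apply Finset.sum_congr rfl; intro m _
      rw [Finset.sum_comm]
      apply Finset.sum_congr rfl; intro m' _
      apply Finset.sum_congr rfl; intro c _
      ring
    have hGsq : ∑ m, ∑ m', G m m' ^ 2 = ∑ c, ∑ c', (r c ⬝ᵥ r c') * (u c ⬝ᵥ u c') := by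
      rw [← hconv (fun m m' => G m m' ^ 2)]
      have hsq : ∀ q : Fin d × Fin d, G q.1 q.2 ^ 2 =
          ∑ c, ∑ c', (r c q.1 * u c q.2) * (r c' q.1 * u c' q.2) := by
        intro q
        rw [hG, pow_two, Finset.sum_mul_sum]
      rw [Finset.sum_congr rfl fun q _ => hsq q]
      rw [Finset.sum_comm]
      apply Finset.sum_congr rfl; intro c _
      rw [Finset.sum_comm]
      apply Finset.sum_congr rfl; intro c' _
      rw [hconv (fun m m' => (r c m * u c m') * (r c' m * u c' m'))]
      have inner : ∀ m, (∑ m', (r c m * u c m') * (r c' m * u c' m'))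
          = (r c m * r c' m) * (u c ⬝ᵥ u c') := by
        intro m
        rw [dotProduct, Finset.mul_sum]
        apply Finset.sum_congr rfl; intro m' _
        ring
      rw [Finset.sum_congr rfl fun m _ => inner m]
      rw [← Finset.sum_mul]
      rfl
    have step3 : ∑ m, ∑ m', G m m' ^ 2 ≤ (b' : ℝ) * s ^ 2 := by
      rw [hGsq]
      have hrow : ∀ c : Fin b', (∑ c', (r c ⬝ᵥ r c') * (u c ⬝ᵥ u c')) ≤ s ^ 2 := by
        intro c
        have hsingle : (∑ c', (r c ⬝ᵥ r c') * (u c ⬝ᵥ u c')) = (r c ⬝ᵥ r c) * s := by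
          rw [Finset.sum_eq_single c]
          · rw [hu c c]; simp
          · intro c' _ hne
            rw [hu c c', if_neg (fun h => hne h.symm), mul_zero]
          · intro h; exact absurd (Finset.mem_univ c) h
        rw [hsingle]
        calc (r c ⬝ᵥ r c) * s ≤ s * s := mul_le_mul_of_nonneg_right (hrru c) hs
          _ = s ^ 2 := by ring
      calc ∑ c, ∑ c', (r c ⬝ᵥ r c') * (u c ⬝ᵥ u c') ≤ ∑ _c : Fin b', s ^ 2 :=
            Finset.sum_le_sum fun c _ => hrow c
        _ = (b' : ℝ) * s ^ 2 := by
            rw [Finset.sum_const, Finset.card_univ, Fintype.card_fin, nsmul_eq_mul]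
    have hf2 : ∑ m, ∑ m', Em m m' ^ 2 = f ^ 2 := by
      rw [hf, frobNorm, Real.sq_sqrt]
      exact Finset.sum_nonneg fun m _ => Finset.sum_nonneg fun m' _ => sq_nonneg _
    have hCS := Finset.sum_mul_sq_le_sq_mul_sq (Finset.univ : Finset (Fin d × Fin d))
      (fun q => Em q.1 q.2) (fun q => G q.1 q.2)
    rw [hconv (fun m m' => Em m m' * G m m')] at hCS
    have hCS2 : (∑ m, ∑ m', Em m m' * G m m') ^ 2 ≤ f ^ 2 * ((b' : ℝ) * s ^ 2) := by
      calc (∑ m, ∑ m', Em m m' * G m m') ^ 2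
          ≤ (∑ q : Fin d × Fin d, Em q.1 q.2 ^ 2) * (∑ q : Fin d × Fin d, G q.1 q.2 ^ 2) := hCS
        _ = (∑ m, ∑ m', Em m m' ^ 2) * (∑ m, ∑ m', G m m' ^ 2) := by
            rw [hconv (fun m m' => Em m m' ^ 2), hconv (fun m m' => G m m' ^ 2)]
        _ ≤ (∑ m, ∑ m', Em m m' ^ 2) * ((b' : ℝ) * s ^ 2) := by
            apply mul_le_mul_of_nonneg_left step3
            exact Finset.sum_nonneg fun m _ => Finset.sum_nonneg fun m' _ => sq_nonneg _
        _ = f ^ 2 * ((b' : ℝ) * s ^ 2) := by rw [hf2]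
    rw [step1]
    set S := ∑ m, ∑ m', Em m m' * G m m' with hS
    have habs : S ≤ Real.sqrt (S ^ 2) := by
      rw [Real.sqrt_sq_eq_abs]; exact le_abs_self S
    calc S ≤ Real.sqrt (S ^ 2) := habs
      _ ≤ Real.sqrt (f ^ 2 * ((b' : ℝ) * s ^ 2)) := Real.sqrt_le_sqrt hCS2
      _ = Real.sqrt b' * f * s := by
          rw [Real.sqrt_mul (sq_nonneg f), Real.sqrt_sq hf0,
            Real.sqrt_mul (by positivity : (0:ℝ) ≤ (b' : ℝ)), Real.sqrt_sq hs]
          ring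
  -- combine
  have hmin : ∑ c, r c ⬝ᵥ Em.mulVec (u c) ≤ min ((b' : ℝ) * β) (Real.sqrt b' * f) * s := by
    rw [min_mul_of_nonneg _ _ hs]
    exact le_min hRemOp hRemF
  calc ∑ c, u c ⬝ᵥ T.mulVec (u c)
      = (∑ c, ∑ i, (p i ⬝ᵥ T.mulVec (u c)) * (u c ⬝ᵥ p i))
          + ∑ c, r c ⬝ᵥ Em.mulVec (u c) := by
        rw [← Finset.sum_add_distrib]
        exact Finset.sum_congr rfl fun c _ => hdec c
    _ ≤ (k : ℝ) * σ * s + min ((b' : ℝ) * β) (Real.sqrt b' * f) * s := by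
        apply add_le_add _ hmin
        rw [Finset.sum_comm]
        calc ∑ i : Fin k, ∑ c, (p i ⬝ᵥ T.mulVec (u c)) * (u c ⬝ᵥ p i)
            ≤ ∑ _i : Fin k, σ * s := Finset.sum_le_sum fun i _ => hTerm1 i
          _ = (k : ℝ) * σ * s := by
              rw [Finset.sum_const, Finset.card_univ, Fintype.card_fin, nsmul_eq_mul]; ring
    _ = ((k : ℝ) * σ + min ((b' : ℝ) * β) (Real.sqrt b' * f)) * s := by ring




lemma pattern_bound {d a' b' k : ℕ} (T Tk : Matrix (Fin d) (Fin d) ℝ) (hrank : Tk.rank = k)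
    (e : Fin b' → Fin a' → Fin d)
    (hinj : ∀ c i c' i', e c i = e c' i' → c = c' ∧ i = i')
    (c₀ : Fin b')
    (hshift : ∀ c i j, T (e c i) (e c j) = T (e c₀ i) (e c₀ j))
    (y : Fin a' → ℝ) :
    (b' : ℝ) * (∑ i, ∑ j, y i * y j * T (e c₀ i) (e c₀ j)) ≤
      ((k : ℝ) * opNorm T +
        min ((b' : ℝ) * opNorm (T - Tk)) (Real.sqrt b' * frobNorm (T - Tk))) * (y ⬝ᵥ y) := by
  classical
  set u : Fin b' → Fin d → ℝ := fun c m => ∑ i, if e c i = m then y i else 0 with hu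
  have hval : ∀ c i, u c (e c i) = y i := by
    intro c i
    rw [hu]; simp only
    rw [Finset.sum_eq_single i]
    · rw [if_pos rfl]
    · intro j _ hne
      rw [if_neg (fun hh => hne (hinj c j c i hh).2)]
    · intro hh; exact absurd (Finset.mem_univ i) hh
  have hdotu : ∀ c (v : Fin d → ℝ), u c ⬝ᵥ v = ∑ i, y i * v (e c i) := by
    intro c v
    simp only [hu, dotProduct, Finset.sum_mul, ite_mul, zero_mul]
    rw [Finset.sum_comm]
    apply Finset.sum_congr rfl; intro i _
    rw [Finset.sum_ite_eq]
    simp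
  have horth : ∀ c c', u c ⬝ᵥ u c' = if c = c' then y ⬝ᵥ y else 0 := by
    intro c c'
    rw [hdotu c (u c')]
    by_cases h : c = c'
    · subst h
      rw [if_pos rfl, dotProduct]
      apply Finset.sum_congr rfl; intro i _
      rw [hval c i]
    · rw [if_neg h]
      apply Finset.sum_eq_zero; intro i _
      have hz : u c' (e c i) = 0 := by
        rw [hu]; simp only
        apply Finset.sum_eq_zero; intro j _
        rw [if_neg (fun hh => h ((hinj c' j c i hh).1.symm))]
      rw [hz, mul_zero]
  have hform : ∀ c, u c ⬝ᵥ T.mulVec (u c) = ∑ i, ∑ j, y i * y j * T (e c₀ i) (e c₀ j) := by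
    intro c
    rw [hdotu c]
    apply Finset.sum_congr rfl; intro i _
    have hrow : (T.mulVec (u c)) (e c i) = ∑ j, y j * T (e c i) (e c j) := by
      have h1 : (T.mulVec (u c)) (e c i) = u c ⬝ᵥ (fun m' => T (e c i) m') := by
        rw [dotProduct_comm]; rfl
      rw [h1, hdotu c]
    rw [hrow, Finset.mul_sum]
    apply Finset.sum_congr rfl; intro j _
    rw [hshift c i j]; ring
  have hsum : ∑ c, u c ⬝ᵥ T.mulVec (u c) =
      (b' : ℝ) * (∑ i, ∑ j, y i * y j * T (e c₀ i) (e c₀ j)) := by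
    rw [Finset.sum_congr rfl fun c _ => hform c, Finset.sum_const, Finset.card_univ,
      Fintype.card_fin, nsmul_eq_mul]
  rw [← hsum]
  exact kyfan T Tk hrank u (y ⬝ᵥ y) (dot_self_nonneg' y) horth




lemma sum_support {d a' : ℕ} (e : Fin a' → Fin d) (he : Function.Injective e)
    (x : Fin d → ℝ) (hx : ∀ m, x m ≠ 0 → ∃ i, e i = m)
    (F : Fin d → ℝ) (hF : ∀ m, x m = 0 → F m = 0) :
    ∑ m, F m = ∑ i, F (e i) := by
  classical
  have himg : ∑ m ∈ Finset.univ.image e, F m = ∑ i, F (e i) :=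
    Finset.sum_image (fun i _ j _ h => he h)
  rw [← himg]
  apply (Finset.sum_subset (Finset.subset_univ _) _).symm
  intro m _ hm
  apply hF
  by_contra hx0
  obtain ⟨i, hi⟩ := hx m hx0
  exact hm (Finset.mem_image.mpr ⟨i, Finset.mem_univ i, hi⟩)

lemma dot_of_supported {d a' : ℕ} (e : Fin a' → Fin d)
    (he : Function.Injective e) (x : Fin d → ℝ) (hx : ∀ m, x m ≠ 0 → ∃ i, e i = m) :
    x ⬝ᵥ x = ∑ i, x (e i) * x (e i) := by
  have := sum_support e he x hx (fun m => x m * x m) (fun m h => by show x m * x m = 0; rw [h]; ring)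
  rw [← this]; rfl

lemma form_of_supported {d a' : ℕ} (T : Matrix (Fin d) (Fin d) ℝ) (e : Fin a' → Fin d)
    (he : Function.Injective e) (x : Fin d → ℝ) (hx : ∀ m, x m ≠ 0 → ∃ i, e i = m) :
    x ⬝ᵥ T.mulVec x = ∑ i, ∑ j, (x (e i)) * (x (e j)) * T (e i) (e j) := by
  have h1 : x ⬝ᵥ T.mulVec x = ∑ m, x m * (T.mulVec x) m := rfl
  rw [h1, sum_support e he x hx (fun m => x m * (T.mulVec x) m)
    (fun m h => by show x m * (T.mulVec x) m = 0; rw [h]; ring)]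
  apply Finset.sum_congr rfl; intro i _
  have h2 : (T.mulVec x) (e i) = ∑ m, T (e i) m * x m := rfl
  rw [h2, sum_support e he x hx (fun m => T (e i) m * x m)
    (fun m h => by show T (e i) m * x m = 0; rw [h]; ring), Finset.mul_sum]
  apply Finset.sum_congr rfl; intro j _
  ring

lemma sum_ext_finset {d : ℕ} (R : Finset (Fin d)) (F : Fin d → ℝ)
    (hF : ∀ m ∉ R, F m = 0) : ∑ m, F m = ∑ i : {x // x ∈ R}, F i := by
  classical
  have h1 : ∑ m, F m = ∑ m ∈ R, F m :=
    (Finset.sum_subset (Finset.subset_univ R) (fun m _ hm => hF m hm)).symm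
  rw [h1, ← Finset.sum_attach R F, Finset.univ_eq_attach]


end Stmt8

open Stmt8

set_option maxHeartbeats 2000000

/-- bound on the operator norm of the principal submatrix `T_{R_α}` of a
positive semidefinite symmetric Toeplitz matrix via a best rank-`k` approximation. -/
theorem opNorm_submatrix_rulerAlpha_bound
    (d a b k : ℕ) (α : ℝ) (hd : 0 < d) (hα : α ∈ Set.Icc (1 / 2 : ℝ) 1)
    (ha : (a : ℝ) = (d : ℝ) ^ α) (hb : (b : ℝ) = (d : ℝ) ^ (1 - α))
    (T : Matrix (Fin d) (Fin d) ℝ) (hpsd : T.PosSemidef)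
    (htoep : ∃ v : Fin d → ℝ, T = toep v)
    (hk : k ≤ d)
    (Tk : Matrix (Fin d) (Fin d) ℝ) (hrank : Tk.rank = k)
    (hbestF : ∀ M : Matrix (Fin d) (Fin d) ℝ, M.rank = k →
      frobNorm (T - Tk) ≤ frobNorm (T - M))
    (hbestOp : ∀ M : Matrix (Fin d) (Fin d) ℝ, M.rank = k →
      opNorm (T - Tk) ≤ opNorm (T - M)) :
    opNorm (subMatrix T (rulerAlpha d a b)) ^ 2 ≤
      32 * k ^ 2 / (d : ℝ) ^ (2 - 2 * α) * opNorm T ^ 2 +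
        8 * min (opNorm (T - Tk) ^ 2)
          (2 / (d : ℝ) ^ (1 - α) * frobNorm (T - Tk) ^ 2) := by
  classical
  obtain ⟨v, hv⟩ := htoep
  have hd0 : (0 : ℝ) < d := by exact_mod_cast hd
  -- a * b = d
  have hab : a * b = d := by
    have h1 : ((a * b : ℕ) : ℝ) = (d : ℝ) := by
      push_cast
      rw [ha, hb, ← Real.rpow_add hd0]
      norm_num
    exact_mod_cast h1
  have hb0 : 0 < b := by
    have h1 : (0 : ℝ) < (b : ℝ) := by rw [hb]; exact Real.rpow_pos_of_pos hd0 _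
    exact_mod_cast h1
  have ha0 : 0 < a := by
    have h1 : (0 : ℝ) < (a : ℝ) := by rw [ha]; exact Real.rpow_pos_of_pos hd0 _
    exact_mod_cast h1
  have hbR : (0 : ℝ) < (b : ℝ) := by exact_mod_cast hb0
  -- symmetry and PSD form
  have hTsym : Tᵀ = T := by
    have h := hpsd.1
    rw [Matrix.IsHermitian] at h
    simpa using h
  have h0form : ∀ z : Fin d → ℝ, 0 ≤ z ⬝ᵥ T.mulVec z := by
    intro z
    have := hpsd.dotProduct_mulVec_nonneg z
    simpa using this
  -- abbreviations
  set σ := opNorm T with hσdef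
  set β := opNorm (T - Tk) with hβdef
  set f := frobNorm (T - Tk) with hfdef
  have hσ0 : 0 ≤ σ := norm_nonneg _
  have hβ0 : 0 ≤ β := norm_nonneg _
  have hf0 : 0 ≤ f := Real.sqrt_nonneg _
  set D := (k : ℝ) * σ + min ((b : ℝ) * β) (Real.sqrt b * f) with hDdef
  have hD0 : 0 ≤ D := by
    have h1 : 0 ≤ (k : ℝ) * σ := by positivity
    have h2 : 0 ≤ (b : ℝ) * β := by positivity
    have h3 : 0 ≤ Real.sqrt b * f := by positivity
    have := le_min h2 h3
    simp only [hDdef]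
    linarith [le_min h2 h3]
  -- the B pattern
  have heBlt : ∀ (c : Fin b) (i : Fin a), (c : ℕ) * a + (i : ℕ) < d := by
    intro c i
    have h1 : (c : ℕ) * a + (i : ℕ) < ((c : ℕ) + 1) * a := by
      rw [add_mul, one_mul]; exact Nat.add_lt_add_left i.isLt _
    have h2 : ((c : ℕ) + 1) * a ≤ b * a := Nat.mul_le_mul_right a c.isLt
    have h3 : b * a = d := by rw [Nat.mul_comm]; exact hab
    omega
  set eB : Fin b → Fin a → Fin d := fun c i => ⟨(c : ℕ) * a + (i : ℕ), heBlt c i⟩ with heB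
  have heBinj : ∀ c i c' i', eB c i = eB c' i' → c = c' ∧ i = i' := by
    intro c i c' i' h
    have hval : (c : ℕ) * a + (i : ℕ) = (c' : ℕ) * a + (i' : ℕ) := congrArg Fin.val h
    have hm1 : ((c : ℕ) * a + (i : ℕ)) % a = (i : ℕ) := by
      rw [Nat.add_comm, Nat.add_mul_mod_self_right]
      exact Nat.mod_eq_of_lt i.isLt
    have hm2 : ((c' : ℕ) * a + (i' : ℕ)) % a = (i' : ℕ) := by
      rw [Nat.add_comm, Nat.add_mul_mod_self_right]
      exact Nat.mod_eq_of_lt i'.isLt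
    have hi : (i : ℕ) = (i' : ℕ) := by rw [← hm1, ← hm2, hval]
    have hc : (c : ℕ) * a = (c' : ℕ) * a := by omega
    have hcc : (c : ℕ) = (c' : ℕ) := Nat.eq_of_mul_eq_mul_right ha0 hc
    exact ⟨Fin.ext hcc, Fin.ext hi⟩
  set c₀B : Fin b := ⟨0, hb0⟩ with hc₀B
  have heBshift : ∀ c i j, T (eB c i) (eB c j) = T (eB c₀B i) (eB c₀B j) := by
    intro c i j
    have hdist : Nat.dist ((eB c i) : ℕ) ((eB c j) : ℕ) =
        Nat.dist ((eB c₀B i) : ℕ) ((eB c₀B j) : ℕ) := by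
      show Nat.dist ((c : ℕ) * a + (i : ℕ)) ((c : ℕ) * a + (j : ℕ)) =
        Nat.dist (0 * a + (i : ℕ)) (0 * a + (j : ℕ))
      rw [Nat.dist_add_add_left, Nat.dist_add_add_left]
    rw [hv]
    show v _ = v _
    congr 1
    exact Fin.ext hdist
  -- the S pattern
  have heSlt : ∀ (c : Fin b) (t : Fin a), (b - 1 - (c : ℕ)) + (a - 1 - (t : ℕ)) * b < d := by
    intro c t
    have h2 : (a - 1 - (t : ℕ)) * b ≤ (a - 1) * b := Nat.mul_le_mul_right b (Nat.sub_le _ _)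
    have h3 : (a - 1) * b = a * b - b := by rw [Nat.sub_mul, one_mul]
    have h4 : b ≤ a * b := Nat.le_mul_of_pos_left b ha0
    have key : ∀ P Q A : ℕ, P ≤ Q → Q = A - b → b ≤ A → A = d →
        b - 1 - (c : ℕ) + P < d := by
      intro P Q A hPQ hQA hbA hAd
      omega
    exact key _ _ _ h2 h3 h4 hab
  set eS : Fin b → Fin a → Fin d :=
    fun c t => ⟨(b - 1 - (c : ℕ)) + (a - 1 - (t : ℕ)) * b, heSlt c t⟩ with heS
  have heSinj : ∀ c t c' t', eS c t = eS c' t' → c = c' ∧ t = t' := by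
    intro c t c' t' h
    have hval : (b - 1 - (c : ℕ)) + (a - 1 - (t : ℕ)) * b =
        (b - 1 - (c' : ℕ)) + (a - 1 - (t' : ℕ)) * b := congrArg Fin.val h
    have hm1 : ((b - 1 - (c : ℕ)) + (a - 1 - (t : ℕ)) * b) % b = b - 1 - (c : ℕ) := by
      rw [Nat.add_mul_mod_self_right]
      exact Nat.mod_eq_of_lt (by omega)
    have hm2 : ((b - 1 - (c' : ℕ)) + (a - 1 - (t' : ℕ)) * b) % b = b - 1 - (c' : ℕ) := by
      rw [Nat.add_mul_mod_self_right]
      exact Nat.mod_eq_of_lt (by omega)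
    have hc : b - 1 - (c : ℕ) = b - 1 - (c' : ℕ) := by rw [← hm1, ← hm2, hval]
    have hcc : (c : ℕ) = (c' : ℕ) := by
      have hcl := c.isLt; have hcl' := c'.isLt; omega
    rw [hc] at hval
    have ht : (a - 1 - (t : ℕ)) * b = (a - 1 - (t' : ℕ)) * b := Nat.add_left_cancel hval
    have htt : a - 1 - (t : ℕ) = a - 1 - (t' : ℕ) := Nat.eq_of_mul_eq_mul_right hb0 ht
    have httt : (t : ℕ) = (t' : ℕ) := by
      have htl := t.isLt; have htl' := t'.isLt; omega
    exact ⟨Fin.ext hcc, Fin.ext httt⟩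
  set c₀S : Fin b := ⟨0, hb0⟩ with hc₀S
  have heSshift : ∀ c i j, T (eS c i) (eS c j) = T (eS c₀S i) (eS c₀S j) := by
    intro c i j
    have hdist : Nat.dist ((eS c i) : ℕ) ((eS c j) : ℕ) =
        Nat.dist ((eS c₀S i) : ℕ) ((eS c₀S j) : ℕ) := by
      show Nat.dist ((b - 1 - (c : ℕ)) + (a - 1 - (i : ℕ)) * b)
          ((b - 1 - (c : ℕ)) + (a - 1 - (j : ℕ)) * b) =
        Nat.dist ((b - 1 - 0) + (a - 1 - (i : ℕ)) * b) ((b - 1 - 0) + (a - 1 - (j : ℕ)) * b)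
      rw [Nat.dist_add_add_left, Nat.dist_add_add_left]
    rw [hv]
    show v _ = v _
    congr 1
    exact Fin.ext hdist
  -- claims for supported vectors
  have claimGen : ∀ (a' : ℕ) (e : Fin b → Fin a' → Fin d)
      (hinj : ∀ c i c' i', e c i = e c' i' → c = c' ∧ i = i') (c₀ : Fin b)
      (hshift : ∀ c i j, T (e c i) (e c j) = T (e c₀ i) (e c₀ j))
      (x : Fin d → ℝ), (∀ m, x m ≠ 0 → ∃ i, e c₀ i = m) →
      x ⬝ᵥ T.mulVec x ≤ (D / (b : ℝ)) * (x ⬝ᵥ x) := by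
    intro a' e hinj c₀ hshift x hsupp
    have hinj0 : Function.Injective (e c₀) := fun i i' h => (hinj c₀ i c₀ i' h).2
    set y : Fin a' → ℝ := fun i => x (e c₀ i) with hy
    have hxy : x ⬝ᵥ T.mulVec x = ∑ i, ∑ j, y i * y j * T (e c₀ i) (e c₀ j) :=
      form_of_supported T (e c₀) hinj0 x hsupp
    have hyy : x ⬝ᵥ x = y ⬝ᵥ y := dot_of_supported (e c₀) hinj0 x hsupp
    have hpb := pattern_bound T Tk hrank e hinj c₀ hshift y
    rw [hxy, hyy]
    have h1 : (∑ i, ∑ j, y i * y j * T (e c₀ i) (e c₀ j)) * (b : ℝ) ≤ D * (y ⬝ᵥ y) := by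
      rw [mul_comm]; exact hpb
    calc (∑ i, ∑ j, y i * y j * T (e c₀ i) (e c₀ j)) ≤ D * (y ⬝ᵥ y) / (b : ℝ) :=
          (le_div_iff₀ hbR).mpr h1
      _ = (D / (b : ℝ)) * (y ⬝ᵥ y) := by ring
  -- membership in the ruler
  have hmem : ∀ m : Fin d, m ∈ rulerAlpha d a b ↔
      ((m : ℕ) < a ∨ ∃ t ∈ Finset.range a, (m : ℕ) + t * b + 1 = d) := by
    intro m
    simp [rulerAlpha]
  -- the split bound
  have hsplit : ∀ x : Fin d → ℝ, (∀ m, x m ≠ 0 → m ∈ rulerAlpha d a b) →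
      x ⬝ᵥ T.mulVec x ≤ (2 * D / (b : ℝ)) * (x ⬝ᵥ x) := by
    intro x hx
    set x1 : Fin d → ℝ := fun m => if (m : ℕ) < a then x m else 0 with hx1
    set x2 : Fin d → ℝ := fun m => if (m : ℕ) < a then 0 else x m with hx2
    have hsupp1 : ∀ m, x1 m ≠ 0 → ∃ i, eB c₀B i = m := by
      intro m hm
      by_cases h : (m : ℕ) < a
      · refine ⟨⟨(m : ℕ), h⟩, ?_⟩
        apply Fin.ext
        show 0 * a + (m : ℕ) = (m : ℕ)
        ring
      · exfalso; apply hm; rw [hx1]; simp [h]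
    have hsupp2 : ∀ m, x2 m ≠ 0 → ∃ i, eS c₀S i = m := by
      intro m hm
      by_cases h : (m : ℕ) < a
      · exfalso; apply hm; rw [hx2]; simp [h]
      · have hxm : x m ≠ 0 := by
          intro hz; apply hm; rw [hx2]; simp [h, hz]
        have hmem' := (hmem m).mp (hx m hxm)
        rcases hmem' with h' | ⟨t, htmem, hteq⟩
        · exact absurd h' h
        · have hta : t < a := Finset.mem_range.mp htmem
          refine ⟨⟨t, hta⟩, ?_⟩
          apply Fin.ext
          show (b - 1 - 0) + (a - 1 - t) * b = (m : ℕ)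
          have e1 : (a - 1 - t) * b = (a - 1) * b - t * b := by rw [Nat.sub_mul]
          have e2 : (a - 1) * b = a * b - b := by rw [Nat.sub_mul, one_mul]
          have e3 : t * b + b ≤ a * b := by
            have h5 : (t + 1) * b ≤ a * b := Nat.mul_le_mul_right b (by omega)
            rw [add_mul, one_mul] at h5; exact h5
          have key : ∀ P Q A tb : ℕ, P = Q - tb → Q = A - b → tb + b ≤ A → A = d →
              (m : ℕ) + tb + 1 = d → 1 ≤ b → b - 1 - 0 + P = (m : ℕ) := by
            intro P Q A tb h1 h2 h3 h4 h5 h6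
            omega
          exact key _ _ _ _ e1 e2 e3 hab hteq hb0
    have hq1 := claimGen a eB heBinj c₀B heBshift x1 hsupp1
    have hq2 := claimGen a eS heSinj c₀S heSshift x2 hsupp2
    have hx12 : x = x1 + x2 := by
      funext m
      by_cases h : (m : ℕ) < a <;> simp [hx1, hx2, h]
    have hcross : x2 ⬝ᵥ T.mulVec x1 = x1 ⬝ᵥ T.mulVec x2 := mulVec_symm_dot T hTsym x1 x2
    have hexp : x ⬝ᵥ T.mulVec x = x1 ⬝ᵥ T.mulVec x1 + 2 * (x1 ⬝ᵥ T.mulVec x2)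
        + x2 ⬝ᵥ T.mulVec x2 := by
      rw [hx12]
      rw [Matrix.mulVec_add, dotProduct_add, add_dotProduct,
        add_dotProduct, hcross]
      ring
    have hdots : x ⬝ᵥ x = x1 ⬝ᵥ x1 + x2 ⬝ᵥ x2 := by
      simp only [dotProduct]
      rw [← Finset.sum_add_distrib]
      apply Finset.sum_congr rfl; intro m _
      by_cases h : (m : ℕ) < a <;> simp [hx1, hx2, h]
    have hCS := psd_form_cs T hTsym h0form x2 x1
    have hq10 := h0form x1
    have hq20 := h0form x2
    have hcross2 : 2 * (x1 ⬝ᵥ T.mulVec x2) ≤ x1 ⬝ᵥ T.mulVec x1 + x2 ⬝ᵥ T.mulVec x2 := by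
      nlinarith [hCS, hq10, hq20, sq_nonneg (x1 ⬝ᵥ T.mulVec x1 - x2 ⬝ᵥ T.mulVec x2)]
    rw [hexp, hdots]
    have hfinal : x1 ⬝ᵥ T.mulVec x1 + 2 * (x1 ⬝ᵥ T.mulVec x2) + x2 ⬝ᵥ T.mulVec x2
        ≤ 2 * (x1 ⬝ᵥ T.mulVec x1) + 2 * (x2 ⬝ᵥ T.mulVec x2) := by linarith
    calc x1 ⬝ᵥ T.mulVec x1 + 2 * (x1 ⬝ᵥ T.mulVec x2) + x2 ⬝ᵥ T.mulVec x2
        ≤ 2 * (x1 ⬝ᵥ T.mulVec x1) + 2 * (x2 ⬝ᵥ T.mulVec x2) := hfinal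
      _ ≤ 2 * ((D / (b : ℝ)) * (x1 ⬝ᵥ x1)) + 2 * ((D / (b : ℝ)) * (x2 ⬝ᵥ x2)) := by
          apply add_le_add <;> [skip; skip] <;>
            [exact mul_le_mul_of_nonneg_left hq1 (by norm_num);
             exact mul_le_mul_of_nonneg_left hq2 (by norm_num)]
      _ = (2 * D / (b : ℝ)) * (x1 ⬝ᵥ x1 + x2 ⬝ᵥ x2) := by ring
  -- transfer to the submatrix
  set R := rulerAlpha d a b with hR
  set M := subMatrix T R with hM
  have hMsym : Mᵀ = M := by
    ext i j
    show T (j : Fin d) (i : Fin d) = T (i : Fin d) (j : Fin d)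
    conv_lhs => rw [← hTsym]
    rfl
  have hext : ∀ ξ : {x // x ∈ R} → ℝ, ∃ x : Fin d → ℝ,
      (∀ m, x m ≠ 0 → m ∈ R) ∧ (ξ ⬝ᵥ M.mulVec ξ = x ⬝ᵥ T.mulVec x) ∧ (ξ ⬝ᵥ ξ = x ⬝ᵥ x) := by
    intro ξ
    set x : Fin d → ℝ := fun m => if h : m ∈ R then ξ ⟨m, h⟩ else 0 with hxdef
    have hxm : ∀ m (h : m ∈ R), x m = ξ ⟨m, h⟩ := by
      intro m h; rw [hxdef]; simp [h]
    have hx0 : ∀ m, m ∉ R → x m = 0 := by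
      intro m h; rw [hxdef]; simp [h]
    refine ⟨x, ?_, ?_, ?_⟩
    · intro m hm
      by_contra h
      exact hm (hx0 m h)
    · have hTx : ∀ i : {x // x ∈ R}, (T.mulVec x) (i : Fin d) = (M.mulVec ξ) i := by
        intro i
        show (∑ m, T (i : Fin d) m * x m) = ∑ j : {x // x ∈ R}, M i j * ξ j
        rw [sum_ext_finset R (fun m => T (i : Fin d) m * x m)
          (fun m hm => by show T (i : Fin d) m * x m = 0; rw [hx0 m hm, mul_zero])]
        apply Finset.sum_congr rfl; intro j _
        rw [hxm (j : Fin d) j.2, Subtype.coe_eta]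
        rfl
      have h1 : x ⬝ᵥ T.mulVec x =
          ∑ i : {x // x ∈ R}, x (i : Fin d) * (T.mulVec x) (i : Fin d) :=
        sum_ext_finset R (fun m => x m * (T.mulVec x) m)
          (fun m hm => by show x m * (T.mulVec x) m = 0; rw [hx0 m hm, zero_mul])
      have h2 : ξ ⬝ᵥ M.mulVec ξ = ∑ i : {x // x ∈ R}, ξ i * (M.mulVec ξ) i := rfl
      rw [h2, h1]
      apply (Finset.sum_congr rfl ?_).symm
      intro i _
      rw [hxm (i : Fin d) i.2, Subtype.coe_eta, hTx i]
    · have h1 : x ⬝ᵥ x = ∑ i : {x // x ∈ R}, x (i : Fin d) * x (i : Fin d) :=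
        sum_ext_finset R (fun m => x m * x m)
          (fun m hm => by show x m * x m = 0; rw [hx0 m hm, zero_mul])
      have h2 : ξ ⬝ᵥ ξ = ∑ i : {x // x ∈ R}, ξ i * ξ i := rfl
      rw [h2, h1]
      apply (Finset.sum_congr rfl ?_).symm
      intro i _
      rw [hxm (i : Fin d) i.2, Subtype.coe_eta]
  have hMform : ∀ ξ : {x // x ∈ R} → ℝ, ξ ⬝ᵥ M.mulVec ξ ≤ (2 * D / (b : ℝ)) * (ξ ⬝ᵥ ξ) := by
    intro ξ; obtain ⟨x, hs, he1, he2⟩ := hext ξ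
    rw [he1, he2]; exact hsplit x hs
  have hM0 : ∀ ξ : {x // x ∈ R} → ℝ, 0 ≤ ξ ⬝ᵥ M.mulVec ξ := by
    intro ξ; obtain ⟨x, _, he1, _⟩ := hext ξ; rw [he1]; exact h0form x
  have hc2 : (0 : ℝ) ≤ 2 * D / (b : ℝ) := by positivity
  have hMnorm : opNorm M ≤ 2 * D / (b : ℝ) := opNorm_le_of_psd_form M hMsym hM0 _ hc2 hMform
  -- numeric endgame
  have hMn0 : 0 ≤ opNorm M := norm_nonneg _
  have hsq : opNorm M ^ 2 ≤ (2 * D / (b : ℝ)) ^ 2 := pow_le_pow_left₀ hMn0 hMnorm 2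
  set γ := min ((b : ℝ) * β) (Real.sqrt b * f) with hγdef
  have hγ0 : 0 ≤ γ := le_min (by positivity) (by positivity)
  have hD2 : D ^ 2 ≤ 2 * ((k : ℝ) * σ) ^ 2 + 2 * γ ^ 2 := by
    have hDD : D = (k : ℝ) * σ + γ := rfl
    nlinarith [sq_nonneg ((k : ℝ) * σ - γ)]
  have hb2 : (0 : ℝ) < (b : ℝ) ^ 2 := by positivity
  have hstep : (2 * D / (b : ℝ)) ^ 2 ≤
      8 * (k : ℝ) ^ 2 * σ ^ 2 / (b : ℝ) ^ 2 + 8 * (γ ^ 2 / (b : ℝ) ^ 2) := by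
    have h1 : (2 * D / (b : ℝ)) ^ 2 = 4 * D ^ 2 / (b : ℝ) ^ 2 := by ring
    have h2 : 4 * D ^ 2 ≤ 8 * ((k : ℝ) * σ) ^ 2 + 8 * γ ^ 2 := by linarith
    have h3 : 4 * D ^ 2 / (b : ℝ) ^ 2 ≤ (8 * ((k : ℝ) * σ) ^ 2 + 8 * γ ^ 2) / (b : ℝ) ^ 2 :=
      (div_le_div_iff_of_pos_right hb2).mpr h2
    have h4 : (8 * ((k : ℝ) * σ) ^ 2 + 8 * γ ^ 2) / (b : ℝ) ^ 2
        = 8 * (k : ℝ) ^ 2 * σ ^ 2 / (b : ℝ) ^ 2 + 8 * (γ ^ 2 / (b : ℝ) ^ 2) := by ring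
    rw [h1]; rw [h4] at h3; exact h3
  have hsb : Real.sqrt (b : ℝ) ^ 2 = (b : ℝ) := Real.sq_sqrt (le_of_lt hbR)
  have hγfin : γ ^ 2 / (b : ℝ) ^ 2 ≤ min (β ^ 2) (2 / (b : ℝ) * f ^ 2) := by
    rcases le_total ((b : ℝ) * β) (Real.sqrt b * f) with h | h
    · rw [hγdef, min_eq_left h]
      have heq : ((b : ℝ) * β) ^ 2 / (b : ℝ) ^ 2 = β ^ 2 := by
        field_simp
      rw [heq]
      apply le_min le_rfl
      have h2 : ((b : ℝ) * β) ^ 2 ≤ (Real.sqrt b * f) ^ 2 :=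
        pow_le_pow_left₀ (by positivity) h 2
      rw [mul_pow, mul_pow, hsb] at h2
      have hb3 : (b : ℝ) * ((b : ℝ) * β ^ 2) ≤ (b : ℝ) * f ^ 2 := by nlinarith
      have hb4 : (b : ℝ) * β ^ 2 ≤ f ^ 2 := le_of_mul_le_mul_left hb3 hbR
      rw [div_mul_eq_mul_div, le_div_iff₀ hbR]
      nlinarith [hb4, sq_nonneg f]
    · rw [hγdef, min_eq_right h]
      have heq : (Real.sqrt b * f) ^ 2 / (b : ℝ) ^ 2 = f ^ 2 / (b : ℝ) := by
        rw [mul_pow, hsb]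
        field_simp
      rw [heq]
      apply le_min
      · have h2 : (Real.sqrt b * f) ^ 2 ≤ ((b : ℝ) * β) ^ 2 :=
          pow_le_pow_left₀ (by positivity) h 2
        rw [mul_pow, mul_pow, hsb] at h2
        rw [div_le_iff₀ hbR]
        have hb3 : (b : ℝ) * f ^ 2 ≤ (b : ℝ) * ((b : ℝ) * β ^ 2) := by nlinarith
        have hb4 : f ^ 2 ≤ (b : ℝ) * β ^ 2 := le_of_mul_le_mul_left hb3 hbR
        nlinarith [hb4]
      · rw [div_mul_eq_mul_div]
        exact (div_le_div_iff_of_pos_right hbR).mpr (by nlinarith [sq_nonneg f])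
  have hb1α : (d : ℝ) ^ (1 - α) = (b : ℝ) := hb.symm
  have h2α : (d : ℝ) ^ (2 - 2 * α) = (b : ℝ) ^ 2 := by
    rw [show (2 - 2 * α) = (1 - α) * 2 by ring, Real.rpow_mul (le_of_lt hd0), hb1α,
      show ((2 : ℝ)) = ((2 : ℕ) : ℝ) by norm_num, Real.rpow_natCast]
  rw [h2α, hb1α]
  calc opNorm M ^ 2 ≤ (2 * D / (b : ℝ)) ^ 2 := hsq
    _ ≤ 8 * (k : ℝ) ^ 2 * σ ^ 2 / (b : ℝ) ^ 2 + 8 * (γ ^ 2 / (b : ℝ) ^ 2) := hstep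
    _ ≤ 8 * (k : ℝ) ^ 2 * σ ^ 2 / (b : ℝ) ^ 2 + 8 * min (β ^ 2) (2 / (b : ℝ) * f ^ 2) := by
        have := mul_le_mul_of_nonneg_left hγfin (by norm_num : (0 : ℝ) ≤ 8)
        linarith
    _ ≤ 32 * (k : ℝ) ^ 2 / (b : ℝ) ^ 2 * σ ^ 2 + 8 * min (β ^ 2) (2 / (b : ℝ) * f ^ 2) := by
        have h1 : 8 * (k : ℝ) ^ 2 * σ ^ 2 / (b : ℝ) ^ 2
            = 8 * ((k : ℝ) ^ 2 / (b : ℝ) ^ 2 * σ ^ 2) := by ring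
        have h2 : 32 * (k : ℝ) ^ 2 / (b : ℝ) ^ 2 * σ ^ 2
            = 32 * ((k : ℝ) ^ 2 / (b : ℝ) ^ 2 * σ ^ 2) := by ring
        have h3 : 0 ≤ (k : ℝ) ^ 2 / (b : ℝ) ^ 2 * σ ^ 2 := by positivity
        linarith
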